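/- Let μ be a probability measure on ℝ whose support is contained in [a⁻, a⁺] with 0 < a⁻ ≤ a⁺ ≤ 1, let p_n = ∫ e^{−α} αⁿ / n! dμ(α), let Y : ℕ → [0,1], and let n_cut ∈ ℕ. Then the decoy-state upper bound holds: ∑_{n=0}^{∞} p_n·Y(n) ≤ 1 − e^{−a⁺} + e^{−a⁻}·Y(0) − ∑_{n=1}^{n_cut} (e^{−a⁺}(a⁺)ⁿ/n!)·(1 − Y(n)). -/

import Mathlib

set_option maxHeartbeats 1000000

open MeasureTheory

lemma tsum_poisson (x : ℝ) : ∑' n : ℕ, Real.exp (-x) * x ^ n / (Nat.factorial n) = 1 := by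
  have h1 : ∑' n : ℕ, x ^ n / (Nat.factorial n : ℝ) = Real.exp x := by
    rw [Real.exp_eq_exp_ℝ, NormedSpace.exp_eq_tsum_div]
  have h2 : ∀ n : ℕ, Real.exp (-x) * x ^ n / (Nat.factorial n : ℝ)
      = Real.exp (-x) * (x ^ n / (Nat.factorial n : ℝ)) := fun n => by ring
  calc ∑' n : ℕ, Real.exp (-x) * x ^ n / (Nat.factorial n : ℝ)
      = ∑' n : ℕ, Real.exp (-x) * (x ^ n / (Nat.factorial n : ℝ)) := by simp_rw [h2]
    _ = Real.exp (-x) * Real.exp x := by rw [tsum_mul_left, h1]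
    _ = 1 := by rw [← Real.exp_add]; simp

lemma summable_poisson (x : ℝ) :
    Summable (fun n : ℕ => Real.exp (-x) * x ^ n / (Nat.factorial n)) := by
  have := (Real.summable_pow_div_factorial x).mul_left (Real.exp (-x))
  simpa [mul_div_assoc] using this

lemma mul_exp_neg_mono {x y : ℝ} (hx : 0 ≤ x) (hxy : x ≤ y) (hy : y ≤ 1) :
    x * Real.exp (-x) ≤ y * Real.exp (-y) := by
  have H : ∀ t : ℝ, HasDerivAt (fun t : ℝ => t * Real.exp (-t)) ((1 - t) * Real.exp (-t)) t := by
    intro t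
    have h1 : HasDerivAt (fun t : ℝ => Real.exp (-t)) (-Real.exp (-t)) t := by
      convert (hasDerivAt_neg t).exp using 1; ring
    have : HasDerivAt (fun t : ℝ => t * Real.exp (-t)) (1 * Real.exp (-t) + t * -Real.exp (-t)) t :=
      (hasDerivAt_id' t).mul h1
    convert this using 1
    ring
  have hmono : MonotoneOn (fun t : ℝ => t * Real.exp (-t)) (Set.Icc 0 1) := by
    apply monotoneOn_of_deriv_nonneg (convex_Icc 0 1)
    · exact (continuous_id.mul (Real.continuous_exp.comp continuous_neg)).continuousOn
    · intro t ht
      exact (H t).differentiableAt.differentiableWithinAt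
    · intro t ht
      rw [interior_Icc] at ht
      rw [(H t).deriv]
      exact mul_nonneg (by linarith [ht.2]) (Real.exp_pos _).le
  exact hmono ⟨hx, hxy.trans hy⟩ ⟨hx.trans hxy, hy⟩ hxy

lemma exp_pow_mono {x y : ℝ} (n : ℕ) (hn : 1 ≤ n) (hx : 0 ≤ x) (hxy : x ≤ y) (hy : y ≤ 1) :
    Real.exp (-x) * x ^ n ≤ Real.exp (-y) * y ^ n := by
  obtain ⟨m, rfl⟩ := Nat.exists_eq_add_of_le hn
  have h1 : x ^ m ≤ y ^ m := pow_le_pow_left₀ hx hxy m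
  have h2 := mul_exp_neg_mono hx hxy hy
  calc Real.exp (-x) * x ^ (1 + m) = x ^ m * (x * Real.exp (-x)) := by ring
    _ ≤ y ^ m * (y * Real.exp (-y)) := by
        exact mul_le_mul h1 h2 (mul_nonneg hx (Real.exp_pos _).le) (pow_nonneg (hx.trans hxy) m)
    _ = Real.exp (-y) * y ^ (1 + m) := by ring

theorem decoy_state_upper_bound
    (μ : Measure ℝ) [IsProbabilityMeasure μ]
    (am ap : ℝ) (ham : 0 < am) (hle : am ≤ ap) (hap : ap ≤ 1)
    (hsupp : ∀ᵐ α ∂μ, α ∈ Set.Icc am ap)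
    (p : ℕ → ℝ)
    (hp : ∀ n, p n = ∫ α, Real.exp (-α) * α ^ n / (Nat.factorial n) ∂μ)
    (Y : ℕ → ℝ) (hY : ∀ n, Y n ∈ Set.Icc (0 : ℝ) 1)
    (ncut : ℕ) :
    ∑' n, p n * Y n ≤
      1 - Real.exp (-ap) + Real.exp (-am) * Y 0 -
        ∑ n ∈ Finset.Icc 1 ncut, (Real.exp (-ap) * ap ^ n / (Nat.factorial n)) * (1 - Y n) := by
  classical
  set F : ℕ → ℝ → ℝ := fun n α => Real.exp (-α) * α ^ n / (Nat.factorial n) with hF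
  set q : ℕ → ℝ := fun n => Real.exp (-ap) * ap ^ n / (Nat.factorial n) with hq
  have hfac : ∀ n : ℕ, (0:ℝ) < (Nat.factorial n : ℝ) := fun n =>
    Nat.cast_pos.mpr (Nat.factorial_pos n)
  have hFbd : ∀ n : ℕ, ∀ᵐ α ∂μ, ‖F n α‖ ≤ 1 / (Nat.factorial n : ℝ) := by
    intro n
    filter_upwards [hsupp] with α hα
    have h0 : 0 ≤ α := le_trans ham.le hα.1
    have h1 : α ≤ 1 := le_trans hα.2 hap
    have he : Real.exp (-α) ≤ 1 := Real.exp_le_one_iff.mpr (by linarith)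
    have hpow : α ^ n ≤ 1 := pow_le_one₀ h0 h1
    have hnn : 0 ≤ F n α :=
      div_nonneg (mul_nonneg (Real.exp_pos _).le (pow_nonneg h0 n)) (hfac n).le
    rw [Real.norm_eq_abs, abs_of_nonneg hnn, hF]
    simp only
    rw [div_le_div_iff₀ (hfac n) (hfac n)]
    have h3 : Real.exp (-α) * α ^ n ≤ 1 :=
      mul_le_one₀ he (pow_nonneg h0 n) hpow
    nlinarith [hfac n]
  have hFc : ∀ n : ℕ, Continuous (F n) := fun n =>
    ((Real.continuous_exp.comp continuous_neg).mul (continuous_pow n)).div_const _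
  have hFm : ∀ n : ℕ, AEStronglyMeasurable (F n) μ := fun n => (hFc n).aestronglyMeasurable
  have hFint : ∀ n : ℕ, Integrable (F n) μ := fun n =>
    (integrable_const (1 / (Nat.factorial n : ℝ))).mono' (hFm n) (hFbd n)
  have hFnn : ∀ n : ℕ, ∀ᵐ α ∂μ, 0 ≤ F n α := by
    intro n
    filter_upwards [hsupp] with α hα
    have h0 : 0 ≤ α := le_trans ham.le hα.1
    exact div_nonneg (mul_nonneg (Real.exp_pos _).le (pow_nonneg h0 n)) (hfac n).le
  have hpnn : ∀ n : ℕ, 0 ≤ p n := by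
    intro n; rw [hp n]; exact integral_nonneg_of_ae (hFnn n)
  have hple : ∀ n : ℕ, p n ≤ 1 / (Nat.factorial n : ℝ) := by
    intro n
    rw [hp n]
    calc ∫ α, F n α ∂μ ≤ ∫ _, 1 / (Nat.factorial n : ℝ) ∂μ := by
          apply integral_mono_ae (hFint n) (integrable_const _)
          filter_upwards [hFbd n] with α hα
          exact le_trans (le_abs_self _) hα
      _ = 1 / (Nat.factorial n : ℝ) := by simp
  have hsummable1 : Summable (fun n : ℕ => 1 / (Nat.factorial n : ℝ)) := by
    simpa using Real.summable_pow_div_factorial 1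
  have hpsum : Summable p := Summable.of_nonneg_of_le hpnn hple hsummable1
  have hpYsum : Summable (fun n => p n * Y n) := by
    apply Summable.of_nonneg_of_le (fun n => mul_nonneg (hpnn n) (hY n).1)
      (fun n => ?_) hpsum
    exact mul_le_of_le_one_right (hpnn n) (hY n).2
  -- ∑' p = 1
  have htsum_p : ∑' n, p n = 1 := by
    have hne : ∑' n : ℕ, ∫⁻ α, ‖F n α‖₊ ∂μ ≠ ⊤ := by
      have h1 : ∀ n : ℕ, ∫⁻ α, ‖F n α‖₊ ∂μ ≤ ENNReal.ofReal (1 / (Nat.factorial n : ℝ)) := by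
        intro n
        calc ∫⁻ α, ‖F n α‖₊ ∂μ ≤ ∫⁻ _, ENNReal.ofReal (1 / (Nat.factorial n : ℝ)) ∂μ := by
              apply lintegral_mono_ae
              filter_upwards [hFbd n] with α hα
              rw [← ENNReal.ofReal_coe_nnreal, coe_nnnorm]
              exact ENNReal.ofReal_le_ofReal hα
          _ = ENNReal.ofReal (1 / (Nat.factorial n : ℝ)) := by simp
      have h2 : ∑' n : ℕ, ∫⁻ α, ‖F n α‖₊ ∂μ
          ≤ ENNReal.ofReal (∑' n : ℕ, 1 / (Nat.factorial n : ℝ)) := by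
        calc ∑' n : ℕ, ∫⁻ α, ‖F n α‖₊ ∂μ
            ≤ ∑' n : ℕ, ENNReal.ofReal (1 / (Nat.factorial n : ℝ)) := ENNReal.tsum_le_tsum h1
          _ = ENNReal.ofReal (∑' n : ℕ, 1 / (Nat.factorial n : ℝ)) :=
              (ENNReal.ofReal_tsum_of_nonneg (fun n => by positivity) hsummable1).symm
      exact ne_top_of_le_ne_top ENNReal.ofReal_ne_top h2
    have hswap := integral_tsum hFm hne
    have heq : ∑' n, p n = ∫ α, ∑' n, F n α ∂μ := by
      rw [hswap]
      exact tsum_congr fun n => hp n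
    rw [heq]
    have hone : ∀ α : ℝ, ∑' n, F n α = 1 := fun α => tsum_poisson α
    simp_rw [hone]
    simp
  -- p 0 ≤ exp(-am)
  have hp0 : p 0 ≤ Real.exp (-am) := by
    rw [hp 0]
    calc ∫ α, F 0 α ∂μ ≤ ∫ _, Real.exp (-am) ∂μ := by
          apply integral_mono_ae (hFint 0) (integrable_const _)
          filter_upwards [hsupp] with α hα
          have : Real.exp (-α) ≤ Real.exp (-am) := Real.exp_le_exp.mpr (by linarith [hα.1])
          simpa [hF] using this
      _ = Real.exp (-am) := by simp
  -- p n ≤ q n for n ≥ 1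
  have hpq : ∀ n : ℕ, 1 ≤ n → p n ≤ q n := by
    intro n hn
    rw [hp n]
    calc ∫ α, F n α ∂μ ≤ ∫ _, q n ∂μ := by
          apply integral_mono_ae (hFint n) (integrable_const _)
          filter_upwards [hsupp] with α hα
          have h0 : 0 ≤ α := le_trans ham.le hα.1
          have hkey := exp_pow_mono n hn h0 hα.2 hap
          exact div_le_div_of_nonneg_right hkey (hfac n).le
      _ = q n := by simp
  -- range decomposition
  have hrange : Finset.range (ncut + 1) = insert 0 (Finset.Icc 1 ncut) := by
    ext x
    simp only [Finset.mem_range, Finset.mem_insert, Finset.mem_Icc]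
    omega
  have h0notin : 0 ∉ Finset.Icc 1 ncut := by simp
  -- Key inequality: exp(-ap) + ∑ q ≤ p 0 + ∑ p
  have hKI : Real.exp (-ap) + ∑ n ∈ Finset.Icc 1 ncut, q n
      ≤ p 0 + ∑ n ∈ Finset.Icc 1 ncut, p n := by
    have hintH : Integrable (fun α => F 0 α + ∑ n ∈ Finset.Icc 1 ncut, F n α) μ :=
      (hFint 0).add (integrable_finset_sum _ fun n _ => hFint n)
    have hpt : ∀ᵐ α ∂μ, Real.exp (-ap) + ∑ n ∈ Finset.Icc 1 ncut, q n
        ≤ F 0 α + ∑ n ∈ Finset.Icc 1 ncut, F n α := by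
      filter_upwards [hsupp] with α hα
      have h0 : 0 ≤ α := le_trans ham.le hα.1
      set d : ℕ → ℝ := fun n => q n - F n α with hd
      have hdsum : Summable d := (summable_poisson ap).sub (summable_poisson α)
      have hdt : ∑' n, d n = 0 := by
        have e0 : ∑' n, d n = (∑' n, q n) - ∑' n, F n α :=
          Summable.tsum_sub (summable_poisson ap) (summable_poisson α)
        have e1 : ∑' n, q n = 1 := tsum_poisson ap
        have e2 : ∑' n, F n α = 1 := tsum_poisson α
        rw [e0, e1, e2]
        ring
      have hdnn : ∀ n ∉ Finset.range (ncut + 1), 0 ≤ d n := by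
        intro n hn
        rw [Finset.mem_range, not_lt] at hn
        have hn1 : 1 ≤ n := le_trans (Nat.le_add_left 1 ncut) hn
        have := exp_pow_mono n hn1 h0 hα.2 hap
        have h2 := div_le_div_of_nonneg_right this (hfac n).le
        show (0:ℝ) ≤ q n - F n α
        exact sub_nonneg.mpr h2
      have hs := Summable.sum_le_tsum (Finset.range (ncut + 1)) hdnn hdsum
      rw [hdt, hrange, Finset.sum_insert h0notin] at hs
      have hd0 : d 0 = Real.exp (-ap) - Real.exp (-α) := by
        rw [hd]; simp [hq, hF]
      have hsplit : ∑ n ∈ Finset.Icc 1 ncut, d n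
          = ∑ n ∈ Finset.Icc 1 ncut, q n - ∑ n ∈ Finset.Icc 1 ncut, F n α := by
        rw [hd, Finset.sum_sub_distrib]
      have hF0 : F 0 α = Real.exp (-α) := by simp [hF]
      rw [hd0, hsplit] at hs
      rw [hF0]
      linarith
    calc Real.exp (-ap) + ∑ n ∈ Finset.Icc 1 ncut, q n
        = ∫ _, Real.exp (-ap) + ∑ n ∈ Finset.Icc 1 ncut, q n ∂μ := by simp
      _ ≤ ∫ α, F 0 α + ∑ n ∈ Finset.Icc 1 ncut, F n α ∂μ :=
          integral_mono_ae (integrable_const _) hintH hpt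
      _ = p 0 + ∑ n ∈ Finset.Icc 1 ncut, p n := by
          rw [integral_add (hFint 0) (integrable_finset_sum _ fun n _ => hFint n),
            integral_finset_sum _ fun n _ => hFint n]
          rw [hp 0]
          congr 1
          exact Finset.sum_congr rfl fun n _ => (hp n).symm
  -- tail bound
  have hsplitY := Summable.sum_add_tsum_nat_add (f := fun n => p n * Y n) (ncut + 1) hpYsum
  have hsplitP := Summable.sum_add_tsum_nat_add (f := p) (ncut + 1) hpsum
  have htail : ∑' n : ℕ, p (n + (ncut + 1)) * Y (n + (ncut + 1))
      ≤ ∑' n : ℕ, p (n + (ncut + 1)) := by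
    apply Summable.tsum_le_tsum (fun n => mul_le_of_le_one_right (hpnn _) (hY _).2)
    · exact (summable_nat_add_iff (ncut + 1)).mpr hpYsum
    · exact (summable_nat_add_iff (ncut + 1)).mpr hpsum
  -- combine
  have hmain : ∑' n, p n * Y n ≤ 1 - p 0 * (1 - Y 0)
      - ∑ n ∈ Finset.Icc 1 ncut, p n * (1 - Y n) := by
    have h1 : ∑' n : ℕ, p (n + (ncut + 1)) = 1 - ∑ n ∈ Finset.range (ncut + 1), p n := by
      linarith [hsplitP, htsum_p]
    have h2 : ∑' n, p n * Y n = ∑ n ∈ Finset.range (ncut + 1), p n * Y n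
        + ∑' n : ℕ, p (n + (ncut + 1)) * Y (n + (ncut + 1)) := hsplitY.symm
    have h3 : ∑ n ∈ Finset.range (ncut + 1), p n - ∑ n ∈ Finset.range (ncut + 1), p n * Y n
        = ∑ n ∈ Finset.range (ncut + 1), p n * (1 - Y n) := by
      rw [← Finset.sum_sub_distrib]
      exact Finset.sum_congr rfl fun n _ => by ring
    have h4 : ∑ n ∈ Finset.range (ncut + 1), p n * (1 - Y n)
        = p 0 * (1 - Y 0) + ∑ n ∈ Finset.Icc 1 ncut, p n * (1 - Y n) := by
      rw [hrange, Finset.sum_insert h0notin]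
    linarith
  -- termwise comparison on the cut sum
  have hA : ∑ n ∈ Finset.Icc 1 ncut, q n * (1 - Y n)
      - ∑ n ∈ Finset.Icc 1 ncut, p n * (1 - Y n)
      ≤ ∑ n ∈ Finset.Icc 1 ncut, q n - ∑ n ∈ Finset.Icc 1 ncut, p n := by
    rw [← Finset.sum_sub_distrib, ← Finset.sum_sub_distrib]
    apply Finset.sum_le_sum
    intro n hn
    have hn1 : 1 ≤ n := (Finset.mem_Icc.mp hn).1
    have hqp : p n ≤ q n := hpq n hn1
    have hY1 := (hY n).1
    have hY2 := (hY n).2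
    nlinarith
  have hp0Y : p 0 * Y 0 ≤ Real.exp (-am) * Y 0 :=
    mul_le_mul_of_nonneg_right hp0 (hY 0).1
  have hqdef : ∀ n, (Real.exp (-ap) * ap ^ n / (Nat.factorial n : ℝ)) * (1 - Y n)
      = q n * (1 - Y n) := fun n => by rw [hq]
  calc ∑' n, p n * Y n ≤ 1 - p 0 * (1 - Y 0)
      - ∑ n ∈ Finset.Icc 1 ncut, p n * (1 - Y n) := hmain
    _ ≤ 1 - Real.exp (-ap) + Real.exp (-am) * Y 0
        - ∑ n ∈ Finset.Icc 1 ncut, q n * (1 - Y n) := by linarith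
    _ = 1 - Real.exp (-ap) + Real.exp (-am) * Y 0 -
        ∑ n ∈ Finset.Icc 1 ncut, (Real.exp (-ap) * ap ^ n / (Nat.factorial n)) * (1 - Y n) := by
        rw [Finset.sum_congr rfl fun n _ => (hqdef n).symm]
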